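/- Fix $1\le i\le m$ and $0\le j<d_i$. The basic Hermite interpolation polynomial $p_{i,j}$ (of degree $<d$, with $p_{i,j}^{(j)}(\alpha_i)=j!$ and all other derivative conditions zero) equals $\frac{1}{\overline{f}_i(\alpha_i)}\sum_{k=0}^{d_i-1-j}(-1)^k\Big(\sum_{k_1+\cdots+\widehat{k_i}+\cdots+k_m=k}\prod_{\ell\ne i}\frac{\binom{d_\ell-1+k_\ell}{k_\ell}}{(\alpha_i-\alpha_\ell)^{k_\ell}}\Big)\overline{f}_{i,j+k}$. -/

import Mathlib

open Finset Polynomial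

/-- The tuples `(k_ℓ)_{ℓ ≠ i}` of nonnegative integers summing to `k`
(encoded as functions on `Fin m` vanishing at `i`). -/
def holeTuples (m : ℕ) (i : Fin m) (k : ℕ) : Finset (Fin m → ℕ) :=
  (Fintype.piFinset fun _ : Fin m => Finset.range (k + 1)).filter
    fun κ => κ i = 0 ∧ ∑ ℓ, κ ℓ = k

lemma geom_inv' {K : Type*} [Field K] (a : K) (ha : a ≠ 0) (n : ℕ) :
    (PowerSeries.C a + PowerSeries.X) ^ (n + 1) *
      PowerSeries.mk (fun k => (-1 : K) ^ k * ((n + k).choose k : K) / a ^ (n + 1 + k)) = 1 := by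
  induction n with
  | zero =>
      ext k
      rcases k with _ | k
      · simp [PowerSeries.coeff_zero_eq_constantCoeff, map_mul, map_add, ha]
      · rw [pow_one, add_mul, map_add, PowerSeries.coeff_C_mul,
          PowerSeries.coeff_succ_X_mul, PowerSeries.coeff_mk, PowerSeries.coeff_mk]
        simp only [Nat.zero_add, Nat.choose_self, Nat.cast_one, mul_one, PowerSeries.coeff_one,
          Nat.succ_ne_zero, if_false]
        field_simp
        ring
  | succ n ih =>
      have key : (PowerSeries.C a + PowerSeries.X) *
          PowerSeries.mk (fun k => (-1 : K) ^ k * ((n + 1 + k).choose k : K) / a ^ (n + 2 + k)) =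
          PowerSeries.mk (fun k => (-1 : K) ^ k * ((n + k).choose k : K) / a ^ (n + 1 + k)) := by
        ext k
        rcases k with _ | k
        · simp only [add_mul, map_add, PowerSeries.coeff_zero_eq_constantCoeff, map_mul]
          simp [ha]
          field_simp
          ring
        · rw [add_mul, map_add, PowerSeries.coeff_C_mul, PowerSeries.coeff_succ_X_mul,
            PowerSeries.coeff_mk, PowerSeries.coeff_mk, PowerSeries.coeff_mk]
          have hpas : ((n + 1 + (k+1)).choose (k+1) : K) = ((n+1+k).choose k : K) + ((n+1+k).choose (k+1) : K) := by
            have : (n + 1 + (k+1)) = (n + 1 + k) + 1 := by ring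
            rw [this, Nat.choose_succ_succ' (n+1+k) k]
            push_cast; ring
          have hch : (n + (k+1)) = (n + 1 + k) := by ring
          rw [hch, hpas]
          have h1 : a ^ (n + 2 + (k+1)) = a ^ (n + 1 + (k+1)) * a := by ring
          have h2 : a ^ (n + 2 + k) = a ^ (n + 1 + (k+1)) := by ring_nf
          rw [h1, h2]
          field_simp
          ring
      calc (PowerSeries.C a + PowerSeries.X) ^ (n + 1 + 1) *
            PowerSeries.mk (fun k => (-1 : K) ^ k * ((n + 1 + k).choose k : K) / a ^ (n + 1 + 1 + k))
          = (PowerSeries.C a + PowerSeries.X) ^ (n + 1) *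
            ((PowerSeries.C a + PowerSeries.X) *
              PowerSeries.mk (fun k => (-1 : K) ^ k * ((n + 1 + k).choose k : K) / a ^ (n + 2 + k))) := by
            rw [pow_succ, mul_assoc]
        _ = 1 := by rw [key, ih]

section
variable {K : Type*} [Field K] {ι : Type*} [DecidableEq ι]

/-- The inverse power series of `(A ℓ + X)^(d ℓ)`. -/
noncomputable def FF (A : ι → K) (d : ι → ℕ) (ℓ : ι) : PowerSeries K :=
  PowerSeries.mk fun k => (-1 : K) ^ k * ((d ℓ - 1 + k).choose k : K) / (A ℓ) ^ (d ℓ + k)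

omit [DecidableEq ι] in
lemma FF_inv (A : ι → K) (d : ι → ℕ) (ℓ : ι) (hA : A ℓ ≠ 0) (hd : 1 ≤ d ℓ) :
    (PowerSeries.C (A ℓ) + PowerSeries.X) ^ (d ℓ) * FF A d ℓ = 1 := by
  have h := geom_inv' (A ℓ) hA (d ℓ - 1)
  rw [Nat.sub_add_cancel hd] at h
  exact h

omit [DecidableEq ι] in
lemma prod_FF_inv (A : ι → K) (d : ι → ℕ) (s : Finset ι) (hA : ∀ ℓ ∈ s, A ℓ ≠ 0)
    (hd : ∀ ℓ ∈ s, 1 ≤ d ℓ) :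
    (∏ ℓ ∈ s, (PowerSeries.C (A ℓ) + PowerSeries.X) ^ (d ℓ)) * ∏ ℓ ∈ s, FF A d ℓ = 1 := by
  rw [← Finset.prod_mul_distrib]
  exact Finset.prod_eq_one fun ℓ hℓ => FF_inv A d ℓ (hA ℓ hℓ) (hd ℓ hℓ)

lemma coeff_prod_FF (A : ι → K) (d : ι → ℕ) (s : Finset ι) (k : ℕ) :
    PowerSeries.coeff k (∏ ℓ ∈ s, FF A d ℓ) =
      (∏ ℓ ∈ s, (A ℓ) ^ (d ℓ))⁻¹ * ((-1 : K) ^ k *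
        ∑ l ∈ Finset.finsuppAntidiag s k, ∏ ℓ ∈ s,
          ((d ℓ - 1 + l ℓ).choose (l ℓ) : K) / (A ℓ) ^ (l ℓ)) := by
  rw [PowerSeries.coeff_prod, Finset.mul_sum, Finset.mul_sum]
  refine Finset.sum_congr rfl fun l hl => ?_
  rw [Finset.mem_finsuppAntidiag] at hl
  have hsum : ∑ ℓ ∈ s, l ℓ = k := hl.1
  calc ∏ ℓ ∈ s, PowerSeries.coeff (l ℓ) (FF A d ℓ)
      = ∏ ℓ ∈ s, ((-1 : K) ^ (l ℓ) * (((d ℓ - 1 + l ℓ).choose (l ℓ) : K) / (A ℓ) ^ (l ℓ) *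
          ((A ℓ) ^ (d ℓ))⁻¹)) := by
        refine Finset.prod_congr rfl fun ℓ _ => ?_
        rw [FF, PowerSeries.coeff_mk, pow_add]
        ring
    _ = (∏ ℓ ∈ s, (-1 : K) ^ (l ℓ)) * ((∏ ℓ ∈ s, ((d ℓ - 1 + l ℓ).choose (l ℓ) : K) / (A ℓ) ^ (l ℓ)) *
          ∏ ℓ ∈ s, ((A ℓ) ^ (d ℓ))⁻¹) := by
        rw [Finset.prod_mul_distrib, Finset.prod_mul_distrib]
    _ = (∏ ℓ ∈ s, (A ℓ) ^ (d ℓ))⁻¹ * ((-1 : K) ^ k *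
          ∏ ℓ ∈ s, ((d ℓ - 1 + l ℓ).choose (l ℓ) : K) / (A ℓ) ^ (l ℓ)) := by
        rw [Finset.prod_pow_eq_pow_sum, hsum, ← Finset.prod_inv_distrib]
        ring
end

lemma sum_antidiag_holeTuples {K : Type*} [CommSemiring K] {m : ℕ} (i : Fin m) (k : ℕ)
    (f : Fin m → ℕ → K) :
    ∑ l ∈ Finset.finsuppAntidiag (Finset.univ.erase i) k, ∏ ℓ ∈ Finset.univ.erase i, f ℓ (l ℓ) =
      ∑ κ ∈ holeTuples m i k, ∏ ℓ ∈ Finset.univ.erase i, f ℓ (κ ℓ) := by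
  refine Finset.sum_nbij' (fun l => ⇑l) (fun κ => Finsupp.equivFunOnFinite.symm κ) ?_ ?_ ?_ ?_ ?_
  · intro l hl
    rw [Finset.mem_finsuppAntidiag] at hl
    have hi : l i = 0 := Finsupp.notMem_support_iff.mp fun h =>
      (Finset.mem_erase.mp (hl.2 h)).1 rfl
    have hsum : ∑ ℓ, l ℓ = k := by
      rw [← Finset.sum_erase_add _ _ (Finset.mem_univ i), hi, add_zero, hl.1]
    rw [holeTuples, Finset.mem_filter]
    refine ⟨Fintype.mem_piFinset.mpr fun ℓ => Finset.mem_range.mpr ?_, hi, hsum⟩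
    show l ℓ < k + 1
    have : l ℓ ≤ ∑ ℓ', l ℓ' := Finset.single_le_sum (fun _ _ => Nat.zero_le _) (Finset.mem_univ ℓ)
    omega
  · intro κ hκ
    rw [holeTuples, Finset.mem_filter] at hκ
    rw [Finset.mem_finsuppAntidiag]
    have hsum : ∑ ℓ ∈ Finset.univ.erase i, κ ℓ + κ i = ∑ ℓ, κ ℓ :=
      Finset.sum_erase_add _ _ (Finset.mem_univ i)
    constructor
    · have h0 := hκ.2.1
      have h1 := hκ.2.2
      simp only [Finsupp.equivFunOnFinite_symm_apply_apply]
      omega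
    · intro ℓ hℓ
      simp only [Finsupp.mem_support_iff, Finsupp.equivFunOnFinite_symm_apply_apply] at hℓ
      exact Finset.mem_erase.mpr ⟨fun h => hℓ (h ▸ hκ.2.1), Finset.mem_univ ℓ⟩
  · intro l _; exact Finsupp.equivFunOnFinite_symm_coe l
  · intro κ _; rfl
  · intro l _; rfl

lemma coeff_trunc_mul {K : Type*} [Field K] (G F St : PowerSeries K) (hGF : G * F = 1) (t : ℕ)
    (hSt : ∀ u ≤ t, PowerSeries.coeff u St = PowerSeries.coeff u F) :
    PowerSeries.coeff t (St * G) = if t = 0 then 1 else 0 := by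
  rw [PowerSeries.coeff_mul]
  have h : ∑ p ∈ Finset.HasAntidiagonal.antidiagonal t, PowerSeries.coeff p.1 St * PowerSeries.coeff p.2 G =
      ∑ p ∈ Finset.HasAntidiagonal.antidiagonal t, PowerSeries.coeff p.1 F * PowerSeries.coeff p.2 G := by
    refine Finset.sum_congr rfl fun p hp => ?_
    rw [hSt p.1 (by have := Finset.HasAntidiagonal.mem_antidiagonal.mp hp; omega)]
  rw [h, ← PowerSeries.coeff_mul, mul_comm, hGF, PowerSeries.coeff_one]

theorem basic_hermite_formula {K : Type*} [Field K] [CharZero K] {m : ℕ}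
    (α : Fin m → K) (hα : Function.Injective α) (d : Fin m → ℕ) (hd : ∀ ℓ, 1 ≤ d ℓ)
    (i : Fin m) (j : ℕ) (hj : j < d i) (p : Polynomial K)
    (hdeg : p.degree < (∑ ℓ, d ℓ : ℕ))
    (hcond : ∀ (ℓ : Fin m) (q : ℕ), q < d ℓ →
      Polynomial.eval (α ℓ) (Polynomial.derivative^[q] p) =
        if ℓ = i ∧ q = j then (j.factorial : K) else 0) :
    p = Polynomial.C (∏ ℓ ∈ Finset.univ.erase i, (α i - α ℓ) ^ (d ℓ))⁻¹ *
      ∑ k ∈ Finset.range (d i - j),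
        Polynomial.C ((-1 : K) ^ k *
            ∑ κ ∈ holeTuples m i k, ∏ ℓ ∈ Finset.univ.erase i,
              ((d ℓ - 1 + κ ℓ).choose (κ ℓ) : K) / (α i - α ℓ) ^ (κ ℓ)) *
          ((X - Polynomial.C (α i)) ^ (j + k) *
            ∏ ℓ ∈ Finset.univ.erase i, (X - Polynomial.C (α ℓ)) ^ (d ℓ)) := by
  classical
  set A : Fin m → K := fun ℓ => α i - α ℓ with hAdef
  set P : K := ∏ ℓ ∈ Finset.univ.erase i, (α i - α ℓ) ^ (d ℓ) with hPdef
  set c : ℕ → K := fun k => (-1 : K) ^ k *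
      ∑ κ ∈ holeTuples m i k, ∏ ℓ ∈ Finset.univ.erase i,
        ((d ℓ - 1 + κ ℓ).choose (κ ℓ) : K) / (α i - α ℓ) ^ (κ ℓ) with hcdef
  set g : Polynomial K := ∏ ℓ ∈ Finset.univ.erase i, (X - Polynomial.C (α ℓ)) ^ (d ℓ) with hgdef
  set N : ℕ := d i - j with hNdef
  set r : Polynomial K := Polynomial.C P⁻¹ *
      ∑ k ∈ Finset.range N, Polynomial.C (c k) * ((X - Polynomial.C (α i)) ^ (j + k) * g)
    with hrdef
  show p = r
  have hAne : ∀ ℓ ∈ Finset.univ.erase i, A ℓ ≠ 0 := by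
    intro ℓ hℓ
    have : ℓ ≠ i := (Finset.mem_erase.mp hℓ).1
    exact sub_ne_zero.mpr fun h => this (hα h.symm)
  have hPne : P ≠ 0 := Finset.prod_ne_zero_iff.mpr fun ℓ hℓ => pow_ne_zero _ (hAne ℓ hℓ)
  -- the sum of degrees
  set D : ℕ := ∑ ℓ, d ℓ with hDdef
  have hdiD : d i ≤ D := Finset.single_le_sum (fun _ _ => Nat.zero_le _) (Finset.mem_univ i)
  -- degree bound for r
  have hrdeg : r.degree < (D : WithBot ℕ) := by
    rw [hrdef]
    refine lt_of_le_of_lt (degree_mul_le _ _) ?_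
    have hCd : (Polynomial.C P⁻¹).degree ≤ 0 := degree_C_le
    have hsum : (∑ k ∈ Finset.range N, Polynomial.C (c k) *
        ((X - Polynomial.C (α i)) ^ (j + k) * g)).degree < (D : WithBot ℕ) := by
      refine lt_of_le_of_lt (Polynomial.degree_sum_le _ _) ?_
      rw [Finset.sup_lt_iff (by exact WithBot.bot_lt_coe D)]
      intro k hk
      have hk' : k < N := Finset.mem_range.mp hk
      have hmon : (((X - Polynomial.C (α i)) ^ (j + k)) * g).Monic :=
        ((monic_X_sub_C (α i)).pow _).mul
          (monic_prod_of_monic _ _ fun ℓ _ => (monic_X_sub_C _).pow _)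
      have hnat : (((X - Polynomial.C (α i)) ^ (j + k)) * g).natDegree =
          (j + k) + ∑ ℓ ∈ Finset.univ.erase i, d ℓ := by
        rw [Polynomial.natDegree_mul (((monic_X_sub_C (α i)).pow _).ne_zero)
            ((monic_prod_of_monic _ _ fun ℓ _ => (monic_X_sub_C _).pow _).ne_zero)]
        congr 1
        · rw [Polynomial.natDegree_pow, natDegree_X_sub_C, mul_one]
        · rw [Polynomial.natDegree_prod _ _
            (fun ℓ _ => ((monic_X_sub_C (α ℓ)).pow _).ne_zero)]
          exact Finset.sum_congr rfl fun ℓ _ => by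
            rw [Polynomial.natDegree_pow, natDegree_X_sub_C, mul_one]
      calc (Polynomial.C (c k) * ((X - Polynomial.C (α i)) ^ (j + k) * g)).degree
          ≤ (Polynomial.C (c k)).degree + ((X - Polynomial.C (α i)) ^ (j + k) * g).degree :=
            degree_mul_le _ _
        _ ≤ 0 + ((X - Polynomial.C (α i)) ^ (j + k) * g).degree :=
            add_le_add_left degree_C_le _
        _ = ((X - Polynomial.C (α i)) ^ (j + k) * g).degree := zero_add _
        _ = (((j + k) + ∑ ℓ ∈ Finset.univ.erase i, d ℓ : ℕ) : WithBot ℕ) := by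
            rw [Polynomial.degree_eq_natDegree hmon.ne_zero, hnat]
        _ < (D : WithBot ℕ) := by
            rw [Nat.cast_lt]
            have : ∑ ℓ ∈ Finset.univ.erase i, d ℓ + d i = D :=
              Finset.sum_erase_add _ _ (Finset.mem_univ i)
            omega
    calc (Polynomial.C P⁻¹).degree + (∑ k ∈ Finset.range N, Polynomial.C (c k) *
          ((X - Polynomial.C (α i)) ^ (j + k) * g)).degree
        ≤ 0 + (∑ k ∈ Finset.range N, Polynomial.C (c k) *
          ((X - Polynomial.C (α i)) ^ (j + k) * g)).degree := by
          exact add_le_add_left hCd _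
      _ < (D : WithBot ℕ) := by rw [zero_add]; exact hsum
  -- Taylor expansion of r at α i
  set G' : Polynomial K := ∏ ℓ ∈ Finset.univ.erase i, (X + Polynomial.C (A ℓ)) ^ (d ℓ) with hG'def
  set St : Polynomial K := ∑ k ∈ Finset.range N, Polynomial.C (c k) * X ^ k with hStdef
  have hXa : taylor (α i) (X - Polynomial.C (α i)) = X := by
    simp [taylor_apply, sub_comp, X_comp, C_comp]
  have hpowt : ∀ n : ℕ, taylor (α i) ((X - Polynomial.C (α i)) ^ n) = X ^ n := by
    intro n
    rw [taylor_apply, Polynomial.pow_comp, ← taylor_apply, hXa]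
  have hfac : ∀ ℓ : Fin m, X + Polynomial.C (α i) - Polynomial.C (α ℓ) =
      X + Polynomial.C (A ℓ) := by
    intro ℓ
    rw [hAdef]
    simp only [map_sub]
    ring
  have hgt : taylor (α i) g = G' := by
    rw [hgdef, hG'def, taylor_apply, Polynomial.prod_comp]
    refine Finset.prod_congr rfl fun ℓ _ => ?_
    rw [Polynomial.pow_comp, Polynomial.sub_comp, Polynomial.X_comp, Polynomial.C_comp, hfac ℓ]
  have htaylor : taylor (α i) r = (Polynomial.C P⁻¹ * St * G') * X ^ j := by
    rw [hrdef, taylor_mul, taylor_C, map_sum]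
    have hterm : ∀ k ∈ Finset.range N,
        taylor (α i) (Polynomial.C (c k) * ((X - Polynomial.C (α i)) ^ (j + k) * g)) =
          Polynomial.C (c k) * (X ^ (j + k) * G') := by
      intro k _
      rw [taylor_mul, taylor_C, taylor_mul, hpowt, hgt]
    rw [Finset.sum_congr rfl hterm]
    have hsum2 : ∑ k ∈ Finset.range N, Polynomial.C (c k) * (X ^ (j + k) * G') =
        St * G' * X ^ j := by
      rw [hStdef, Finset.sum_mul, Finset.sum_mul]
      refine Finset.sum_congr rfl fun k _ => ?_
      rw [pow_add]
      ring
    rw [hsum2]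
    ring
  -- coefficients of the truncated series times G'
  have hW : ∀ t < N, (Polynomial.C P⁻¹ * St * G').coeff t = if t = 0 then 1 else 0 := by
    intro t ht
    have hcoe : ((Polynomial.C P⁻¹ * St * G' : Polynomial K) : PowerSeries K) =
        ((Polynomial.C P⁻¹ * St : Polynomial K) : PowerSeries K) * (G' : PowerSeries K) :=
      Polynomial.coe_mul _ _
    rw [← Polynomial.coeff_coe, hcoe]
    refine coeff_trunc_mul _ (∏ ℓ ∈ Finset.univ.erase i, FF A d ℓ) _ ?_ t ?_
    · have hcast : ((G' : Polynomial K) : PowerSeries K) =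
          ∏ ℓ ∈ Finset.univ.erase i, (PowerSeries.C (A ℓ) + PowerSeries.X) ^ (d ℓ) := by
        rw [hG'def]
        rw [← Polynomial.coeToPowerSeries.ringHom_apply, map_prod]
        refine Finset.prod_congr rfl fun ℓ _ => ?_
        rw [map_pow, map_add, Polynomial.coeToPowerSeries.ringHom_apply,
          Polynomial.coeToPowerSeries.ringHom_apply, Polynomial.coe_X, Polynomial.coe_C, add_comm]
      rw [hcast]
      exact prod_FF_inv A d _ hAne fun ℓ _ => hd ℓ
    · intro u hu
      have hu' : u < N := lt_of_le_of_lt hu ht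
      rw [Polynomial.coeff_coe]
      have hStc : St.coeff u = c u := by
        rw [hStdef, Polynomial.finset_sum_coeff]
        simp only [Polynomial.coeff_C_mul, Polynomial.coeff_X_pow]
        rw [Finset.sum_eq_single u (fun k _ hk => by simp [Ne.symm hk])
          (fun h => absurd (Finset.mem_range.mpr hu') h)]
        simp
      rw [Polynomial.coeff_C_mul, hStc]
      rw [coeff_prod_FF A d _ u]
      rw [sum_antidiag_holeTuples i u (fun ℓ n => ((d ℓ - 1 + n).choose n : K) / (A ℓ) ^ n)]
  -- derivative conditions for r at α i
  have hevalr : ∀ q < d i, Polynomial.eval (α i) (Polynomial.derivative^[q] r) =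
      if q = j then (j.factorial : K) else 0 := by
    intro q hq
    have h1 : Polynomial.derivative^[q] r = q.factorial • Polynomial.hasseDeriv q r := by
      rw [← Polynomial.factorial_smul_hasseDeriv]
      rfl
    rw [h1, Polynomial.eval_smul, ← Polynomial.taylor_coeff, htaylor,
      Polynomial.coeff_mul_X_pow']
    by_cases hjq : j ≤ q
    · rw [if_pos hjq, hW (q - j) (by omega)]
      by_cases hqj : q = j
      · subst hqj
        simp
      · rw [if_neg (by omega), if_neg hqj]
        simp
    · rw [if_neg hjq, if_neg (by omega)]
      simp
  -- derivative conditions for r everywhere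
  have hrcond : ∀ (ℓ : Fin m) (q : ℕ), q < d ℓ →
      Polynomial.eval (α ℓ) (Polynomial.derivative^[q] r) =
        if ℓ = i ∧ q = j then (j.factorial : K) else 0 := by
    intro ℓ q hq
    by_cases hℓ : ℓ = i
    · subst hℓ
      rw [hevalr q hq]
      by_cases hqj : q = j <;> simp [hqj]
    · have hdvdg : (X - Polynomial.C (α ℓ)) ^ (d ℓ) ∣ g := by
        rw [hgdef]
        exact Finset.dvd_prod_of_mem _ (Finset.mem_erase.mpr ⟨hℓ, Finset.mem_univ ℓ⟩)
      have hdvd : (X - Polynomial.C (α ℓ)) ^ (d ℓ) ∣ r := by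
        rw [hrdef]
        refine Dvd.dvd.mul_left (Finset.dvd_sum fun k _ => ?_) _
        exact Dvd.dvd.mul_left (Dvd.dvd.mul_left hdvdg _) _
      have h2 := Polynomial.pow_sub_dvd_iterate_derivative_of_pow_dvd q hdvd
      have h3 : (X - Polynomial.C (α ℓ)) ∣ Polynomial.derivative^[q] r :=
        (dvd_pow_self _ (by omega : d ℓ - q ≠ 0)).trans h2
      rw [Polynomial.dvd_iff_isRoot.mp h3]
      simp [hℓ]
  -- uniqueness
  by_contra hne
  have hpr : p - r ≠ 0 := sub_ne_zero.mpr hne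
  have hdvdall : ∀ ℓ : Fin m, (X - Polynomial.C (α ℓ)) ^ (d ℓ) ∣ (p - r) := by
    intro ℓ
    have hroot : ∀ q ≤ d ℓ - 1, (Polynomial.derivative^[q] (p - r)).IsRoot (α ℓ) := by
      intro q hq
      have hq' : q < d ℓ := by have := hd ℓ; omega
      show Polynomial.eval (α ℓ) (Polynomial.derivative^[q] (p - r)) = 0
      rw [Polynomial.iterate_derivative_sub, Polynomial.eval_sub, hcond ℓ q hq',
        hrcond ℓ q hq', sub_self]
    have hlt := Polynomial.lt_rootMultiplicity_of_isRoot_iterate_derivative_of_mem_nonZeroDivisors'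
      hpr hroot (fun m' _ hm' => mem_nonZeroDivisors_of_ne_zero (Nat.cast_ne_zero.mpr hm'))
    exact (pow_dvd_pow _ (by have := hd ℓ; omega)).trans
      (Polynomial.pow_rootMultiplicity_dvd _ _)
  have hfdvd : (∏ ℓ, (X - Polynomial.C (α ℓ)) ^ (d ℓ)) ∣ (p - r) :=
    Finset.prod_dvd_of_coprime
      (fun ℓ _ ℓ' _ hℓℓ' => ((Polynomial.pairwise_coprime_X_sub_C hα) hℓℓ').pow)
      (fun ℓ _ => hdvdall ℓ)
  have hfmon : (∏ ℓ, (X - Polynomial.C (α ℓ)) ^ (d ℓ) : Polynomial K).Monic :=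
    monic_prod_of_monic _ _ fun ℓ _ => (monic_X_sub_C _).pow _
  have hfdeg : (∏ ℓ, (X - Polynomial.C (α ℓ)) ^ (d ℓ) : Polynomial K).degree = (D : WithBot ℕ) := by
    rw [Polynomial.degree_eq_natDegree hfmon.ne_zero,
      Polynomial.natDegree_prod _ _ (fun ℓ _ => ((monic_X_sub_C (α ℓ)).pow _).ne_zero)]
    norm_cast
    exact Finset.sum_congr rfl fun ℓ _ => by
      rw [Polynomial.natDegree_pow, natDegree_X_sub_C, mul_one]
  have hle := Polynomial.degree_le_of_dvd hfdvd hpr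
  have hlt2 : (p - r).degree < (D : WithBot ℕ) :=
    (Polynomial.degree_sub_le _ _).trans_lt (max_lt hdeg hrdeg)
  rw [hfdeg] at hle
  exact absurd (hle.trans_lt hlt2) (lt_irrefl _)
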